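/- If (W,S) is a Coxeter system of type Λ and α is a reduced expression such that the braid graph B(α) is a tree, then B(α) is a path graph. -/

import Mathlib

open scoped Classical

namespace Braid

variable {B : Type*}

/-- A Coxeter matrix is *simply laced* if all of its entries are 1, 2 or 3
(in particular, no entry is `0`, which encodes `m(s,t) = ∞`). -/
def SimplyLaced (M : CoxeterMatrix B) : Prop := ∀ s t : B, 1 ≤ M s t ∧ M s t ≤ 3

/-- The Coxeter graph has an edge between `s` and `t` iff `m(s,t) ≥ 3`
(where the entry `0` encodes `∞`). -/
def CoxEdge (M : CoxeterMatrix B) (s t : B) : Prop := M s t = 0 ∨ 3 ≤ M s t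

/-- A Coxeter matrix is *triangle free* if its Coxeter graph contains no three-cycles. -/
def TriangleFree (M : CoxeterMatrix B) : Prop :=
  ∀ s t u : B, ¬ (CoxEdge M s t ∧ CoxEdge M t u ∧ CoxEdge M s u)

/-- A Coxeter system is of *type Λ* if it is simply laced and triangle free. -/
def TypeLambda (M : CoxeterMatrix B) : Prop := SimplyLaced M ∧ TriangleFree M

/-- `y` is obtained from `x` by replacing the factor `s t s` occupying the (0-based)
positions `p, p+1, p+2` by `t s t`, where `m(s,t) = 3`. -/
def BraidMoveAt (M : CoxeterMatrix B) (x y : List B) (p : ℕ) : Prop :=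
  ∃ s t : B, M s t = 3 ∧
    x = x.take p ++ [s, t, s] ++ x.drop (p + 3) ∧
    y = x.take p ++ [t, s, t] ++ x.drop (p + 3)

/-- `x` and `y` differ by a single braid move (applied to `x`). -/
def BraidMove (M : CoxeterMatrix B) (x y : List B) : Prop := ∃ p, BraidMoveAt M x y p

/-- Two words are *braid equivalent* if one is obtained from the other
by a sequence of braid moves. -/
def BraidEquiv (M : CoxeterMatrix B) : List B → List B → Prop :=
  Relation.ReflTransGen (BraidMove M)

/-- The braid class of `α`. -/
def braidClass (M : CoxeterMatrix B) (α : List B) : Set (List B) := {x | BraidEquiv M α x}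

/-- The braid graph of `α`: vertices are the members of the braid class of `α`, with two
vertices adjacent iff they differ by a single braid move. -/
def braidGraph (M : CoxeterMatrix B) (α : List B) : SimpleGraph (braidClass M α) :=
  SimpleGraph.fromRel (fun x y => BraidMove M x.1 y.1)

/-- `c` is the (1-based) center of a braid shadow of `β`; that is, the interval of 1-based
positions `⟦c-1, c+1⟧` is a braid shadow of `β`. -/
def ShadowCenter (M : CoxeterMatrix B) (β : List B) (c : ℕ) : Prop :=
  2 ≤ c ∧ ∃ s t : B, M s t = 3 ∧ β = β.take (c - 2) ++ [s, t, s] ++ β.drop (c + 1)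

/-- The set of (1-based) centers of the braid shadows of the braid class `[α]`. -/
def classCenters (M : CoxeterMatrix B) (α : List B) : Set ℕ :=
  {c | ∃ β ∈ braidClass M α, ShadowCenter M β c}

/-- The dimension of `α`: the number of braid shadows of `[α]`. -/
noncomputable def braidDim (M : CoxeterMatrix B) (α : List B) : ℕ :=
  (classCenters M α).ncard

/-- The (1-based) center of the `i`-th braid shadow of `[α]`, the braid shadows being
numbered `1, …, braidDim M α` from left to right. -/
noncomputable def nthCenter (M : CoxeterMatrix B) (α : List B) (i : ℕ) : ℕ :=
  Nat.nth (· ∈ classCenters M α) (i - 1)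

/-- The `i`-th entry of the signature of `x ∈ [α]`: the letter of `x` appearing in the
center of the `i`-th braid shadow of `[α]`. -/
noncomputable def sig (M : CoxeterMatrix B) (α x : List B) (i : ℕ) : Option B :=
  x[nthCenter M α i - 1]?

/-- `sigbar M α x i` is the set of members of `[α]` whose signature agrees with that of `x`
in position `i`. -/
noncomputable def sigbar (M : CoxeterMatrix B) (α x : List B) (i : ℕ) :
    Set (braidClass M α) :=
  {y | sig M α y.1 i = sig M α x i}

/-- `x` and `y` differ by a single braid move occurring in the `j`-th braid shadow
of `[α]` (i.e. the edge `{x,y}` of the braid graph is labeled by `j`). -/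
noncomputable def EdgeLabeled (M : CoxeterMatrix B) (α x y : List B) (j : ℕ) : Prop :=
  1 ≤ j ∧ j ≤ braidDim M α ∧
    (BraidMoveAt M x y (nthCenter M α j - 2) ∨ BraidMoveAt M y x (nthCenter M α j - 2))

/-- `x` and `y` differ by a single braid move occurring in the braid shadow with
(1-based) center `c`. -/
def MoveAtCenter (M : CoxeterMatrix B) (x y : List B) (c : ℕ) : Prop :=
  BraidMoveAt M x y (c - 2) ∨ BraidMoveAt M y x (c - 2)

/-- `BraidSeq M α js x y` : the list `js` of braid-shadow numbers records a braid sequence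
transforming `x` into `y`, each move being applied in the indicated braid shadow of `[α]`. -/
noncomputable def BraidSeq (M : CoxeterMatrix B) (α : List B) :
    List ℕ → List B → List B → Prop
  | [], x, y => x = y
  | j :: js, x, y => ∃ z, EdgeLabeled M α x z j ∧ BraidSeq M α js z y

/-- A braid sequence from `x` to `y` is *minimal* if no shorter braid sequence from `x`
to `y` exists. -/
noncomputable def MinimalBraidSeq (M : CoxeterMatrix B) (α : List B)
    (js : List ℕ) (x y : List B) : Prop :=
  BraidSeq M α js x y ∧ ∀ ls : List ℕ, BraidSeq M α ls x y → js.length ≤ ls.length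

/-- `Δ(sig(α), sig(β))`: the number of positions at which the signatures of `α` and `β`
differ. -/
noncomputable def sigDelta (M : CoxeterMatrix B) (α β : List B) : ℕ :=
  {i | 1 ≤ i ∧ i ≤ braidDim M α ∧ sig M α α i ≠ sig M α β i}.ncard

/-- A reduced expression is a *link* if it has length 1, or it has odd length `m` and the
braid shadows of its braid class are exactly `⟦1,3⟧, ⟦3,5⟧, …, ⟦m-2,m⟧`
(equivalently, the shadow centers are exactly the even numbers `2, 4, …, m-1`). -/
def IsLink (M : CoxeterMatrix B) (α : List B) : Prop :=
  1 ≤ α.length ∧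
    (α.length = 1 ∨ (Odd α.length ∧
      classCenters M α = {c | Even c ∧ 2 ≤ c ∧ c + 1 ≤ α.length}))

/-- `maj M α β γ i`: the majority among the `i`-th signature entries of `α`, `β`, `γ`. -/
noncomputable def maj (M : CoxeterMatrix B) (α β γ : List B) (i : ℕ) : Option B :=
  if sig M α α i = sig M α β i ∨ sig M α α i = sig M α γ i then sig M α α i
  else sig M α β i

/-- `sigbarPair M α x y`: the set of members of `[α]` whose signature agrees with the
common signature entries of `x` and `y`. -/
noncomputable def sigbarPair (M : CoxeterMatrix B) (α x y : List B) :
    Set (braidClass M α) :=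
  {z | ∀ i : ℕ, 1 ≤ i → i ≤ braidDim M α →
    sig M α x i = sig M α y i → sig M α z.1 i = sig M α x i}

/-! ### Graph-theoretic notions -/

/-- A set `U` of vertices of a graph is *convex* if every vertex on every geodesic
(shortest path) between two vertices of `U` belongs to `U`. -/
def GraphConvex {V : Type*} (G : SimpleGraph V) (U : Set V) : Prop :=
  ∀ u ∈ U, ∀ v ∈ U, ∀ p : G.Walk u v, p.length = G.dist u v → ∀ x ∈ p.support, x ∈ U

/-- The interval `I(u,v)`: the set of vertices lying on some geodesic between `u` and `v`. -/
def interval {V : Type*} (G : SimpleGraph V) (u v : V) : Set V :=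
  {x | ∃ p : G.Walk u v, p.length = G.dist u v ∧ x ∈ p.support}

/-- A connected graph is *median* if any three vertices admit a unique median. -/
def IsMedianGraph {V : Type*} (G : SimpleGraph V) : Prop :=
  G.Connected ∧ ∀ u v w : V,
    ∃! x, x ∈ interval G u v ∩ interval G u w ∩ interval G v w

/-- The hypercube of dimension `n`: vertices are binary strings of length `n`, adjacent
iff they differ in exactly one digit. -/
def hypercube (n : ℕ) : SimpleGraph (Fin n → Bool) :=
  SimpleGraph.fromRel (fun x y => ∃! i, x i ≠ y i)

/-- A graph is a *partial cube* if it admits an isometric embedding into some hypercube. -/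
def IsPartialCube {V : Type*} (G : SimpleGraph V) : Prop :=
  ∃ (n : ℕ) (f : V → Fin n → Bool),
    ∀ u v : V, (hypercube n).dist (f u) (f v) = G.dist u v

/-- The isometric dimension of a graph: the minimal dimension of a hypercube into which it
isometrically embeds. -/
noncomputable def isoDim {V : Type*} (G : SimpleGraph V) : ℕ :=
  sInf {n | ∃ f : V → Fin n → Bool,
    ∀ u v : V, (hypercube n).dist (f u) (f v) = G.dist u v}

/-- The semicube `W_{uv}` : the set of vertices strictly closer to `u` than to `v`. -/
def semicube {V : Type*} (G : SimpleGraph V) (u v : V) : Set V :=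
  {w | G.dist w u < G.dist w v}

variable {M : CoxeterMatrix B}

lemma moveAt_iff {x y : List B} {p : ℕ} :
    BraidMoveAt M x y p ↔ ∃ (s t : B) (l r : List B), M s t = 3 ∧ l.length = p ∧
      x = l ++ ([s, t, s] ++ r) ∧ y = l ++ ([t, s, t] ++ r) := by
  constructor
  · rintro ⟨s, t, h3, hx, hy⟩
    refine ⟨s, t, x.take p, x.drop (p + 3), h3, ?_, by simpa using hx, by simpa using hy⟩
    have hlen := congrArg List.length hx
    simp at hlen
    simp [List.length_take]
    omega
  · rintro ⟨s, t, l, r, h3, hl, hx, hy⟩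
    have ht : x.take p = l := by
      rw [hx, ← hl, List.take_left]
    have hd : x.drop (p + 3) = r := by
      have : x = (l ++ [s, t, s]) ++ r := by simp [hx]
      rw [this, List.drop_left']
      simp [hl]
    exact ⟨s, t, h3, by rw [ht, hd]; simpa using hx, by rw [ht, hd]; simpa using hy⟩

lemma ne_of_m3 {s t : B} (h3 : M s t = 3) : s ≠ t := by
  rintro rfl
  simp [M.diagonal] at h3

lemma moveAt_symm {x y : List B} {p : ℕ} (h : BraidMoveAt M x y p) : BraidMoveAt M y x p := by
  rw [moveAt_iff] at h ⊢
  obtain ⟨s, t, l, r, h3, hl, hx, hy⟩ := h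
  exact ⟨t, s, l, r, (M.symmetric t s).trans h3, hl, hy, hx⟩

lemma moveAt_length {x y : List B} {p : ℕ} (h : BraidMoveAt M x y p) :
    y.length = x.length := by
  rw [moveAt_iff] at h
  obtain ⟨s, t, l, r, h3, hl, hx, hy⟩ := h
  simp [hx, hy]

lemma moveAt_sublist {x y : List B} {p : ℕ} (h : BraidMoveAt M x y p) {a : B}
    (ha : a ∈ y) : a ∈ x := by
  rw [moveAt_iff] at h
  obtain ⟨s, t, l, r, h3, hl, hx, hy⟩ := h
  subst hx hy
  simp at ha ⊢
  tauto

lemma moveAt_det {x y z : List B} {p : ℕ} (h1 : BraidMoveAt M x y p)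
    (h2 : BraidMoveAt M x z p) : y = z := by
  rw [moveAt_iff] at h1 h2
  obtain ⟨s, t, l, r, h3, hl, hx, hy⟩ := h1
  obtain ⟨s', t', l', r', h3', hl', hx', hy'⟩ := h2
  obtain ⟨rfl, h2⟩ := List.append_inj (hx ▸ hx' : l ++ _ = l' ++ _) (by omega)
  simp only [List.cons_append, List.nil_append, List.cons.injEq] at h2
  obtain ⟨rfl, rfl, -, rfl⟩ := h2
  rw [hy, hy']

lemma moveAt_ne {x y : List B} {p : ℕ} (h : BraidMoveAt M x y p) : x ≠ y := by
  rw [moveAt_iff] at h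
  obtain ⟨s, t, l, r, h3, hl, hx, hy⟩ := h
  have hst := ne_of_m3 h3
  rw [hx, hy]
  intro hc
  have := List.append_cancel_left hc
  simp at this
  exact hst this.1

section Cox
variable {W : Type*} [Group W] (cs : CoxeterSystem M W)

lemma prod_sts {s t : B} (h3 : M s t = 3) :
    cs.wordProd [s, t, s] = cs.wordProd [t, s, t] := by
  have h3' : M t s = 3 := (M.symmetric t s).trans h3
  have := cs.wordProd_braidWord_eq s t
  rw [CoxeterSystem.braidWord, CoxeterSystem.braidWord, h3, h3'] at this
  have e1 : CoxeterSystem.alternatingWord s t 3 = [t, s, t] := by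
    simp [CoxeterSystem.alternatingWord]
  have e2 : CoxeterSystem.alternatingWord t s 3 = [s, t, s] := by
    simp [CoxeterSystem.alternatingWord]
  rw [e1, e2] at this
  exact this.symm

lemma moveAt_wordProd {x y : List B} {p : ℕ} (h : BraidMoveAt M x y p) :
    cs.wordProd y = cs.wordProd x := by
  rw [moveAt_iff] at h
  obtain ⟨s, t, l, r, h3, hl, hx, hy⟩ := h
  rw [hx, hy]
  simp only [cs.wordProd_append]
  rw [prod_sts cs h3]

lemma equiv_wordProd {x : List B} (h : BraidEquiv M α x) :
    cs.wordProd x = cs.wordProd α := by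
  induction h with
  | refl => rfl
  | tail _ h2 ih =>
    obtain ⟨p, hp⟩ := h2
    rw [moveAt_wordProd cs hp, ih]

lemma equiv_length {x : List B} (h : BraidEquiv M α x) : x.length = α.length := by
  induction h with
  | refl => rfl
  | tail _ h2 ih =>
    obtain ⟨p, hp⟩ := h2
    rw [moveAt_length hp, ih]

lemma equiv_mem {x : List B} (h : BraidEquiv M α x) {a : B} (ha : a ∈ x) : a ∈ α := by
  induction h with
  | refl => exact ha
  | tail _ h2 ih =>
    obtain ⟨p, hp⟩ := h2
    exact ih (moveAt_sublist hp ha)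

lemma equiv_isReduced {x : List B} (hα : cs.IsReduced α) (h : BraidEquiv M α x) :
    cs.IsReduced x := by
  unfold CoxeterSystem.IsReduced at hα ⊢
  rw [equiv_wordProd cs h, equiv_length h, hα]

end Cox

lemma braidClass_finite (α : List B) : (braidClass M α).Finite := by
  rcases isEmpty_or_nonempty B with hB | hB
  · exact Set.Finite.subset (Set.finite_univ (α := List B)) (Set.subset_univ _)
  have : Finite ↥(braidClass M α) := by
    let f : ↥(braidClass M α) → (Fin α.length → Fin (α.length + 1)) := fun x i =>
      ⟨α.idxOf (x.1.get ⟨i.1, by rw [equiv_length x.2]; exact i.2⟩),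
        by
          have hm : x.1.get ⟨i.1, by rw [equiv_length x.2]; exact i.2⟩ ∈ α :=
            equiv_mem x.2 (x.1.get_mem _)
          have := List.idxOf_lt_length_iff.2 hm
          omega⟩
    have hf : Function.Injective f := by
      intro x y hxy
      ext1
      apply List.ext_get (by rw [equiv_length x.2, equiv_length y.2])
      intro i h1 h2
      have hi : i < α.length := by rw [← equiv_length x.2]; exact h1
      have := congrFun hxy ⟨i, hi⟩
      simp only [f, Fin.mk.injEq] at this
      have hmx : x.1.get ⟨i, h1⟩ ∈ α := equiv_mem x.2 (x.1.get_mem _)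
      have hmy : y.1.get ⟨i, h2⟩ ∈ α := equiv_mem y.2 (y.1.get_mem _)
      have ex := List.idxOf_get (List.idxOf_lt_length_iff.2 hmx)
      have ey := List.idxOf_get (List.idxOf_lt_length_iff.2 hmy)
      rw [← ex, ← ey]
      congr 1
      exact Fin.ext this
    exact Finite.of_injective f hf
  exact Set.toFinite _

theorem tree_deg2_iso_path {V : Type*} [Fintype V] (G : SimpleGraph V) [DecidableRel G.Adj]
    (ht : G.IsTree) (hdeg : ∀ v, G.degree v ≤ 2) :
    ∃ n, Nonempty (G ≃g SimpleGraph.pathGraph n) := by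
  have hconn : G.Connected := ht.isConnected
  haveI : Nonempty V := hconn.nonempty
  have hn1 : 1 ≤ Fintype.card V := Fintype.card_pos
  obtain ⟨u, hu⟩ : ∃ u, G.degree u ≤ 1 := by
    by_contra h
    push_neg at h
    have hsum : ∑ v, G.degree v = 2 * G.edgeFinset.card := G.sum_degrees_eq_twice_card_edges
    have hcard := ht.card_edgeFinset
    have h2 : 2 * Fintype.card V ≤ ∑ v, G.degree v := by
      calc 2 * Fintype.card V = ∑ _v : V, 2 := by
            simp [Finset.sum_const, mul_comm]
        _ ≤ ∑ v, G.degree v := Finset.sum_le_sum (fun v _ => h v)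
    omega
  have decomp : ∀ (d : ℕ) (v : V), G.dist u v = d + 1 → ∃ b, G.Adj b v ∧ G.dist u b = d := by
    intro d v hv
    obtain ⟨p, hp⟩ := SimpleGraph.exists_walk_of_dist_ne_zero
      (show G.dist u v ≠ 0 by omega)
    have hne : v ≠ u := by
      intro h; subst h; rw [SimpleGraph.dist_self] at hv; omega
    obtain ⟨b, hadj, q, hq⟩ := SimpleGraph.Walk.exists_eq_cons_of_ne hne p.reverse
    have hqlen : q.length = d := by
      have := congrArg SimpleGraph.Walk.length hq
      simp only [SimpleGraph.Walk.length_reverse, SimpleGraph.Walk.length_cons, hp, hv] at this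
      omega
    have h1 : G.dist u b ≤ d := by
      have := SimpleGraph.dist_le q.reverse
      simpa [hqlen] using this
    have h2 : d ≤ G.dist u b := by
      have htri := hconn.dist_triangle (u := u) (v := b) (w := v)
      have hbv : G.dist b v = 1 := SimpleGraph.dist_eq_one_iff_adj.2 hadj.symm
      omega
    exact ⟨b, hadj.symm, by omega⟩
  have uniq : ∀ (d : ℕ) (v w : V), G.dist u v = d → G.dist u w = d → v = w := by
    intro d
    induction d with
    | zero =>
      intro v w hv hw
      have h1 : u = v := hconn.dist_eq_zero_iff.1 hv
      have h2 : u = w := hconn.dist_eq_zero_iff.1 hw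
      rw [← h1, ← h2]
    | succ d ih =>
      intro v w hv hw
      obtain ⟨b, hbv, hb⟩ := decomp d v hv
      obtain ⟨c, hcw, hc⟩ := decomp d w hw
      have hbc : b = c := ih b c hb hc
      subst hbc
      by_contra hne
      have hvmem : v ∈ G.neighborFinset b := by
        rw [SimpleGraph.mem_neighborFinset]; exact hbv
      have hwmem : w ∈ G.neighborFinset b := by
        rw [SimpleGraph.mem_neighborFinset]; exact hcw
      rcases Nat.eq_zero_or_pos d with hd | hd
      · subst hd
        have hbu : u = b := hconn.dist_eq_zero_iff.1 hb
        have hcard2 : 2 ≤ G.degree b := by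
          have hsub : ({v, w} : Finset V) ⊆ G.neighborFinset b := by
            intro a ha
            simp only [Finset.mem_insert, Finset.mem_singleton] at ha
            rcases ha with rfl | rfl <;> assumption
          have := Finset.card_le_card hsub
          rwa [Finset.card_insert_of_notMem (by simpa using hne),
            Finset.card_singleton] at this
        rw [← hbu] at hcard2
        omega
      · obtain ⟨d', rfl⟩ : ∃ d', d = d' + 1 := ⟨d - 1, by omega⟩
        obtain ⟨c', hc'b, hc'⟩ := decomp d' b hb
        have h1 : c' ≠ v := by
          intro h; subst h; rw [hc'] at hv; omega
        have h2 : c' ≠ w := by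
          intro h; subst h; rw [hc'] at hw; omega
        have hcmem : c' ∈ G.neighborFinset b := by
          rw [SimpleGraph.mem_neighborFinset]; exact hc'b.symm
        have : 2 < (G.neighborFinset b).card := by
          rw [Finset.two_lt_card]
          exact ⟨v, hvmem, w, hwmem, c', hcmem, hne, h1.symm, h2.symm⟩
        have := hdeg b
        rw [SimpleGraph.degree] at this
        omega
  have hlt : ∀ v, G.dist u v < Fintype.card V := by
    intro v
    rcases Nat.eq_zero_or_pos (G.dist u v) with h | h
    · omega
    obtain ⟨p, hp⟩ := SimpleGraph.exists_walk_of_dist_ne_zero (show G.dist u v ≠ 0 by omega)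
    have hb := p.bypass_isPath
    have hlen : p.bypass.length ≤ p.length := p.length_bypass_le
    have hd := SimpleGraph.dist_le p.bypass
    have hl := hb.length_lt
    omega
  let f : V → Fin (Fintype.card V) := fun v => ⟨G.dist u v, hlt v⟩
  have hf : ∀ v, (f v : ℕ) = G.dist u v := fun v => rfl
  have hinj : Function.Injective f := by
    intro v w h
    exact uniq (G.dist u v) v w rfl (by rw [← hf w, ← h, hf])
  have hbij : Function.Bijective f := (Fintype.bijective_iff_injective_and_card f).2
    ⟨hinj, by simp⟩
  refine ⟨Fintype.card V, ⟨⟨Equiv.ofBijective f hbij, @fun v w => ?_⟩⟩⟩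
  rw [SimpleGraph.pathGraph_adj]
  simp only [Equiv.ofBijective_apply, hf]
  constructor
  · rintro (h | h)
    · obtain ⟨b, hbw, hb⟩ := decomp (G.dist u v) w (by omega)
      have : b = v := uniq _ b v hb rfl
      subst this
      exact hbw
    · obtain ⟨b, hbv, hb⟩ := decomp (G.dist u w) v (by omega)
      have : b = w := uniq _ b w hb rfl
      subst this
      exact hbv.symm
  · intro hadj
    have h1 : G.dist u v ≤ G.dist u w + 1 := by
      have htri := hconn.dist_triangle (u := u) (v := w) (w := v)
      have : G.dist w v = 1 := SimpleGraph.dist_eq_one_iff_adj.2 hadj.symm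
      omega
    have h2 : G.dist u w ≤ G.dist u v + 1 := by
      have htri := hconn.dist_triangle (u := u) (v := v) (w := w)
      have : G.dist v w = 1 := SimpleGraph.dist_eq_one_iff_adj.2 hadj
      omega
    have h3 : G.dist u v ≠ G.dist u w := by
      intro h
      exact G.ne_of_adj hadj (uniq _ _ _ rfl h.symm)
    omega

lemma twoPaths {α x y z : List B} {p p' : ℕ} (hx : BraidEquiv M α x)
    (h1 : BraidMoveAt M x y p) (h2 : BraidMoveAt M x z p') (hpp : p + 3 ≤ p')
    (htree : (braidGraph M α).IsTree) : False := by
  rw [moveAt_iff] at h1 h2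
  obtain ⟨s, t, l, r, h3, hl, hxe, hye⟩ := h1
  obtain ⟨s', t', l', r', h3', hl', hxe', hye'⟩ := h2
  have hst : s ≠ t := ne_of_m3 h3
  have hst' : s' ≠ t' := ne_of_m3 h3'
  have e : (l ++ [s, t, s]) ++ r = l' ++ ([s', t', s'] ++ r') := by
    rw [← hxe', hxe]; simp
  set c : List B := l'.drop (p + 3) with hc
  have hl'' : l' = (l ++ [s, t, s]) ++ c := by
    have h4 : (l ++ [s, t, s]).length = p + 3 := by simp [hl]
    have htake : l ++ [s, t, s] = l'.take (p + 3) := by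
      have := congrArg (List.take (p + 3)) e
      rw [List.take_left' h4, List.take_append_of_le_length (by omega)] at this
      exact this
    rw [htake, hc, List.take_append_drop]
  have hrr : r = c ++ ([s', t', s'] ++ r') := by
    apply List.append_cancel_left (as := l ++ [s, t, s])
    rw [e, hl'']
    simp
  -- the four words
  set Y : List B := l ++ ([t, s, t] ++ (c ++ ([s', t', s'] ++ r'))) with hY
  set Z : List B := l ++ ([s, t, s] ++ (c ++ ([t', s', t'] ++ r'))) with hZ
  set Wd : List B := l ++ ([t, s, t] ++ (c ++ ([t', s', t'] ++ r'))) with hW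
  have hxX : x = l ++ ([s, t, s] ++ (c ++ ([s', t', s'] ++ r'))) := by
    rw [hxe, hrr]
  have hclen : (l ++ [s, t, s] ++ c).length = p' := by
    have := congrArg List.length hl''
    simp at this ⊢
    omega
  have mxy : BraidMoveAt M x Y p :=
    moveAt_iff.2 ⟨s, t, l, c ++ ([s', t', s'] ++ r'), h3, hl, hxX, hY⟩
  have mxz : BraidMoveAt M x Z p' :=
    moveAt_iff.2 ⟨s', t', l ++ [s, t, s] ++ c, r', h3', hclen,
      by rw [hxX]; simp, by rw [hZ]; simp⟩
  have myw : BraidMoveAt M Y Wd (p + 3 + c.length) :=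
    moveAt_iff.2 ⟨s', t', l ++ [t, s, t] ++ c, r', h3', by simp [hl]; omega,
      by rw [hY]; simp, by rw [hW]; simp⟩
  have mzw : BraidMoveAt M Z Wd p :=
    moveAt_iff.2 ⟨s, t, l, c ++ ([t', s', t'] ++ r'), h3, hl, hZ, hW⟩
  -- memberships
  have hYm : BraidEquiv M α Y := hx.tail ⟨p, mxy⟩
  have hZm : BraidEquiv M α Z := hx.tail ⟨p', mxz⟩
  have hWm : BraidEquiv M α Wd := hYm.tail ⟨_, myw⟩
  -- vertices
  let vX : ↥(braidClass M α) := ⟨x, hx⟩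
  let vY : ↥(braidClass M α) := ⟨Y, hYm⟩
  let vZ : ↥(braidClass M α) := ⟨Z, hZm⟩
  let vW : ↥(braidClass M α) := ⟨Wd, hWm⟩
  -- inequalities of the underlying lists
  have key : ∀ (L u v : List B) (a b : B), a ≠ b → L ++ (a :: u) ≠ L ++ (b :: v) := by
    intro L u v a b hab h
    have := List.append_cancel_left h
    simp only [List.cons.injEq] at this
    exact hab this.1
  have neXY : x ≠ Y := by
    rw [hxX, hY]; exact key l _ _ s t hst
  have neXZ : x ≠ Z := by
    rw [hxX, hZ]
    intro h
    have h' := List.append_cancel_left (List.append_cancel_left h)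
    exact key c _ _ s' t' hst' h'
  have neXW : x ≠ Wd := by
    rw [hxX, hW]; exact key l _ _ s t hst
  have neYZ : Y ≠ Z := by
    rw [hY, hZ]; exact key l _ _ t s hst.symm
  have neYW : Y ≠ Wd := by
    rw [hY, hW]
    intro h
    have h' := List.append_cancel_left (List.append_cancel_left h)
    exact key c _ _ s' t' hst' h'
  have neZW : Z ≠ Wd := by
    rw [hZ, hW]; exact key l _ _ s t hst
  -- adjacencies
  have A1 : (braidGraph M α).Adj vX vY :=
    (SimpleGraph.fromRel_adj _ _ _).2
      ⟨fun h => neXY (congrArg Subtype.val h), Or.inl ⟨p, mxy⟩⟩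
  have A2 : (braidGraph M α).Adj vY vW :=
    (SimpleGraph.fromRel_adj _ _ _).2
      ⟨fun h => neYW (congrArg Subtype.val h), Or.inl ⟨_, myw⟩⟩
  have A3 : (braidGraph M α).Adj vX vZ :=
    (SimpleGraph.fromRel_adj _ _ _).2
      ⟨fun h => neXZ (congrArg Subtype.val h), Or.inl ⟨p', mxz⟩⟩
  have A4 : (braidGraph M α).Adj vZ vW :=
    (SimpleGraph.fromRel_adj _ _ _).2
      ⟨fun h => neZW (congrArg Subtype.val h), Or.inl ⟨p, mzw⟩⟩
  let P1 : (braidGraph M α).Walk vX vW := .cons A1 (.cons A2 .nil)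
  let P2 : (braidGraph M α).Walk vX vW := .cons A3 (.cons A4 .nil)
  have hP1 : P1.IsPath := by
    rw [SimpleGraph.Walk.isPath_def]
    simp only [P1, SimpleGraph.Walk.support_cons, SimpleGraph.Walk.support_nil]
    refine List.nodup_cons.2 ⟨?_, List.nodup_cons.2 ⟨?_, List.nodup_singleton _⟩⟩
    · intro h
      simp only [List.mem_cons, List.mem_singleton, List.not_mem_nil, or_false] at h
      rcases h with h | h
      · exact neXY (congrArg Subtype.val h)
      · exact neXW (congrArg Subtype.val h)
    · intro h
      simp only [List.mem_singleton] at h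
      exact neYW (congrArg Subtype.val h)
  have hP2 : P2.IsPath := by
    rw [SimpleGraph.Walk.isPath_def]
    simp only [P2, SimpleGraph.Walk.support_cons, SimpleGraph.Walk.support_nil]
    refine List.nodup_cons.2 ⟨?_, List.nodup_cons.2 ⟨?_, List.nodup_singleton _⟩⟩
    · intro h
      simp only [List.mem_cons, List.mem_singleton, List.not_mem_nil, or_false] at h
      rcases h with h | h
      · exact neXZ (congrArg Subtype.val h)
      · exact neXW (congrArg Subtype.val h)
    · intro h
      simp only [List.mem_singleton] at h
      exact neZW (congrArg Subtype.val h)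
  obtain ⟨P, -, hun⟩ := htree.existsUnique_path vX vW
  have e12 : P1 = P2 := (hun P1 hP1).trans (hun P2 hP2).symm
  have := congrArg (fun q => q.support) e12
  simp only [P1, P2, SimpleGraph.Walk.support_cons, SimpleGraph.Walk.support_nil,
    List.cons.injEq] at this
  exact neYZ (congrArg Subtype.val this.2.1)

lemma overlap_notReduced {W : Type*} [Group W] (cs : CoxeterSystem M W) {α x y z : List B}
    {p : ℕ} (hα : cs.IsReduced α) (hx : BraidEquiv M α x)
    (h1 : BraidMoveAt M x y p) (h2 : BraidMoveAt M x z (p + 1)) : False := by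
  rw [moveAt_iff] at h1 h2
  obtain ⟨s, t, l, r, h3, hl, hxe, hye⟩ := h1
  obtain ⟨s', t', l', r', h3', hl', hxe', hye'⟩ := h2
  have e : (l ++ [s]) ++ ([t, s] ++ r) = l' ++ ([s', t', s'] ++ r') := by
    rw [← hxe', hxe]; simp
  obtain ⟨h4, h5⟩ := List.append_inj e (by simp [hl, hl'])
  simp only [List.cons_append, List.nil_append, List.cons.injEq] at h5
  obtain ⟨rfl, rfl, hr⟩ := h5
  -- now r = s' :: r' with s' = t... h5 : [t,s]++r = [s',t',s']++r' : t::(s::r) = s'::(t'::(s'::r'))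
  -- after rfl's : names: s' := t, t' := s, hr : r = t :: r'? check shape below
  subst hr
  have hred : cs.IsReduced x := equiv_isReduced cs hα hx
  have hx4 : x = l ++ ([s, t, s, t] ++ r') := by
    rw [hxe]; simp
  have k : cs.wordProd [s, t, s, t] = cs.wordProd [t, s] := by
    have h1' : ([s, t, s, t] : List B) = [s, t, s] ++ [t] := rfl
    rw [h1', cs.wordProd_append, prod_sts cs h3, ← cs.wordProd_append]
    show cs.wordProd [t, s, t, t] = cs.wordProd [t, s]
    simp only [cs.wordProd_cons, cs.wordProd_nil, mul_one, mul_assoc,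
      cs.simple_mul_simple_self]
  have hπ : cs.wordProd x = cs.wordProd (l ++ ([t, s] ++ r')) := by
    rw [hx4, cs.wordProd_append, cs.wordProd_append, k, ← cs.wordProd_append,
      ← cs.wordProd_append]
  have hlen : cs.length (cs.wordProd x) ≤ l.length + 2 + r'.length := by
    have := cs.length_wordProd_le (l ++ ([t, s] ++ r'))
    rw [← hπ] at this
    simp at this
    omega
  have hxlen : x.length = l.length + 4 + r'.length := by
    rw [hx4]; simp; omega
  rw [CoxeterSystem.IsReduced] at hred
  omega

lemma degree_le_two {W : Type*} [Group W] (cs : CoxeterSystem M W) {α : List B}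
    (hα : cs.IsReduced α) (htree : (braidGraph M α).IsTree)
    [Fintype ↥(braidClass M α)] [DecidableRel (braidGraph M α).Adj]
    (x : ↥(braidClass M α)) : (braidGraph M α).degree x ≤ 2 := by
  by_contra h
  push_neg at h
  rw [SimpleGraph.degree, Finset.two_lt_card] at h
  obtain ⟨a, ha, b, hb, c, hc, hab, hac, hbc⟩ := h
  rw [SimpleGraph.mem_neighborFinset] at ha hb hc
  -- each neighbor gives a move out of x
  have getmove : ∀ y : ↥(braidClass M α), (braidGraph M α).Adj x y →
      ∃ p, BraidMoveAt M x.1 y.1 p := by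
    intro y hy
    rw [braidGraph, SimpleGraph.fromRel_adj] at hy
    rcases hy.2 with ⟨p, hp⟩ | ⟨p, hp⟩
    · exact ⟨p, hp⟩
    · exact ⟨p, moveAt_symm hp⟩
  obtain ⟨pa, hpa⟩ := getmove a ha
  obtain ⟨pb, hpb⟩ := getmove b hb
  obtain ⟨pc, hpc⟩ := getmove c hc
  -- positions are pairwise distinct
  have hdet : ∀ (y z : ↥(braidClass M α)) (p : ℕ), BraidMoveAt M x.1 y.1 p →
      BraidMoveAt M x.1 z.1 p → y = z := by
    intro y z p h1 h2
    exact Subtype.ext (moveAt_det h1 h2)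
  have hab' : pa ≠ pb := fun h => hab (hdet a b pa hpa (h ▸ hpb))
  have hac' : pa ≠ pc := fun h => hac (hdet a c pa hpa (h ▸ hpc))
  have hbc' : pb ≠ pc := fun h => hbc (hdet b c pb hpb (h ▸ hpc))
  -- pairwise, valid positions are exactly 2 apart
  have pair : ∀ (y z : ↥(braidClass M α)) (p q : ℕ), BraidMoveAt M x.1 y.1 p →
      BraidMoveAt M x.1 z.1 q → p < q → q = p + 2 := by
    intro y z p q h1 h2 hpq
    rcases Nat.lt_or_ge q (p + 3) with hq | hq
    · rcases Nat.eq_or_lt_of_le hpq with h | h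
      · exact absurd (overlap_notReduced cs hα x.2 h1 (h ▸ h2)) id
      · omega
    · exact absurd (twoPaths x.2 h1 h2 (by omega) htree) id
  -- three distinct positions pairwise 2 apart: impossible
  have tri : ∀ (y z : ↥(braidClass M α)) (p q : ℕ), BraidMoveAt M x.1 y.1 p →
      BraidMoveAt M x.1 z.1 q → p ≠ q → q = p + 2 ∨ p = q + 2 := by
    intro y z p q h1 h2 hne
    rcases Nat.lt_or_ge p q with h | h
    · exact Or.inl (pair y z p q h1 h2 h)
    · exact Or.inr (pair z y q p h2 h1 (by omega))
  have t1 := tri a b pa pb hpa hpb hab'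
  have t2 := tri a c pa pc hpa hpc hac'
  have t3 := tri b c pb pc hpb hpc hbc'
  omega

theorem braidGraph_tree_is_path
    {B W : Type*} [Group W] (M : CoxeterMatrix B) (cs : CoxeterSystem M W)
    (hM : TypeLambda M) (α : List B) (hα : cs.IsReduced α)
    (htree : (braidGraph M α).IsTree) :
    ∃ n : ℕ, Nonempty (braidGraph M α ≃g SimpleGraph.pathGraph n) := by
  haveI : Fintype ↥(braidClass M α) := (braidClass_finite α).fintype
  haveI : DecidableRel (braidGraph M α).Adj := Classical.decRel _
  exact tree_deg2_iso_path _ htree (degree_le_two cs hα htree)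

end Braid
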